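/- arXiv:math/0412254 — 2 statements merged into one kernel-verified Lean document; each statement's English description precedes it below -/
import Mathlib

section
/- Let (X, μ) be a standard Borel space with an atomless Borel probability measure μ and let T : X → X be a μ-preserving Borel automorphism that is aperiodic (for μ-almost every x, T^k(x) ≠ x for all integers k ≠ 0). Then for every n ∈ ℕ and every ε > 0 there exist Borel sets A, B ⊆ X with μ(A) ≥ 1/4 − ε, μ(B) ≥ 1/4 − ε, and μ(T^k(A) ∩ B) = 0 for every integer k with |k| ≤ n. In particular, the metric-measure space (X, d_T, μ) is not concentrated, where d_T(x, y) = min{|k| : T^k(x) = y} (and ∞ if x and y lie on different T-orbits). -/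
open MeasureTheory Filter Set
open scoped ENNReal

/-- A partial isomorphism of a standard Borel space `X`: a Borel bijection between
two Borel subsets `dom` and `ran` of `X`, with Borel inverse. -/
structure PartialIso (X : Type*) [MeasurableSpace X] where
  dom : Set X
  ran : Set X
  toFun : X → X
  invFun : X → X
  measurableSet_dom : MeasurableSet dom
  measurableSet_ran : MeasurableSet ran
  measurable_toFun : Measurable toFun
  measurable_invFun : Measurable invFun
  mapsTo : Set.MapsTo toFun dom ran
  mapsTo_inv : Set.MapsTo invFun ran dom
  left_inv : ∀ x ∈ dom, invFun (toFun x) = x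
  right_inv : ∀ y ∈ ran, toFun (invFun y) = y

namespace PartialIso

variable {X : Type*} [MeasurableSpace X]

/-- The identity as a partial isomorphism. -/
def refl (X : Type*) [MeasurableSpace X] : PartialIso X :=
  ⟨Set.univ, Set.univ, id, id, MeasurableSet.univ, MeasurableSet.univ,
   measurable_id, measurable_id, Set.mapsTo_univ _ _, Set.mapsTo_univ _ _,
   fun _ _ => rfl, fun _ _ => rfl⟩

/-- The inverse of a partial isomorphism. -/
def symm (f : PartialIso X) : PartialIso X :=
  ⟨f.ran, f.dom, f.invFun, f.toFun, f.measurableSet_ran, f.measurableSet_dom,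
   f.measurable_invFun, f.measurable_toFun, f.mapsTo_inv, f.mapsTo,
   f.right_inv, f.left_inv⟩

/-- Composition (first `f`, then `g`) of partial isomorphisms, on its natural domain. -/
def trans (f g : PartialIso X) : PartialIso X where
  dom := f.dom ∩ f.toFun ⁻¹' g.dom
  ran := g.ran ∩ g.invFun ⁻¹' f.ran
  toFun := g.toFun ∘ f.toFun
  invFun := f.invFun ∘ g.invFun
  measurableSet_dom := f.measurableSet_dom.inter (f.measurable_toFun g.measurableSet_dom)
  measurableSet_ran := g.measurableSet_ran.inter (g.measurable_invFun f.measurableSet_ran)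
  measurable_toFun := g.measurable_toFun.comp f.measurable_toFun
  measurable_invFun := f.measurable_invFun.comp g.measurable_invFun
  mapsTo := by
    rintro x ⟨hx1, hx2⟩
    refine ⟨g.mapsTo hx2, ?_⟩
    show g.invFun (g.toFun (f.toFun x)) ∈ f.ran
    rw [g.left_inv _ hx2]
    exact f.mapsTo hx1
  mapsTo_inv := by
    rintro y ⟨hy1, hy2⟩
    refine ⟨f.mapsTo_inv hy2, ?_⟩
    show f.toFun (f.invFun (g.invFun y)) ∈ g.dom
    rw [f.right_inv _ hy2]
    exact g.mapsTo_inv hy1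
  left_inv := by
    rintro x ⟨hx1, hx2⟩
    show f.invFun (g.invFun (g.toFun (f.toFun x))) = x
    rw [g.left_inv _ hx2, f.left_inv _ hx1]
  right_inv := by
    rintro y ⟨hy1, hy2⟩
    show g.toFun (f.toFun (f.invFun (g.invFun y))) = y
    rw [f.right_inv _ hy2, g.right_inv _ hy1]

/-- A partial isomorphism is nonsingular for `μ` (is a partial isomorphism of `(X, μ)`)
if it maps null sets inside its domain exactly to null sets. -/
def Nonsingular (μ : Measure X) (f : PartialIso X) : Prop :=
  ∀ A ⊆ f.dom, MeasurableSet A → (μ A = 0 ↔ μ (f.toFun '' A) = 0)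

/-- The graph of the partial isomorphism `f` is contained in the relation `R`. -/
def IsInnerOf (f : PartialIso X) (R : Set (X × X)) : Prop :=
  ∀ x ∈ f.dom, (x, f.toFun x) ∈ R

end PartialIso

variable {X : Type*} [MeasurableSpace X]

/-- `IsWord Φ m k` : `m` is a `Φ`-word of length `k`, i.e. a composition of `k` elements
of `Φ` and their inverses (on its natural domain). -/
def IsWord (Φ : Set (PartialIso X)) (m : PartialIso X) (k : ℕ) : Prop :=
  ∃ l : List (PartialIso X), l.length = k ∧
    (∀ φ ∈ l, φ ∈ Φ ∨ ∃ ψ ∈ Φ, φ = ψ.symm) ∧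
    m = l.foldl PartialIso.trans (PartialIso.refl X)

/-- `wordDistLE Φ μ A B r` : the essential distance `d_Φ(A, B)` is at most `r`, i.e. the
set of points of `A` sent into `B` by some `Φ`-word of length at most `r` has positive
measure. -/
def wordDistLE (Φ : Set (PartialIso X)) (μ : Measure X) (A B : Set X) (r : ℕ) : Prop :=
  0 < μ {x ∈ A | ∃ m k, IsWord Φ m k ∧ k ≤ r ∧ x ∈ m.dom ∧ m.toFun x ∈ B}

/-- The metric-measure space `(X, d_Φ, μ)` is concentrated. -/
def Concentrated (Φ : Set (PartialIso X)) (μ : Measure X) : Prop :=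
  ∀ δ : ℝ≥0∞, 0 < δ → ∃ r : ℕ, ∀ A B : Set X, MeasurableSet A → MeasurableSet B →
    δ ≤ μ A → δ ≤ μ B → wordDistLE Φ μ A B r

/-- The metric `d_Φ` is ergodic relative to `μ` : any two sets of positive measure are at
finite essential distance. -/
def MetricErgodic (Φ : Set (PartialIso X)) (μ : Measure X) : Prop :=
  ∀ A B : Set X, MeasurableSet A → MeasurableSet B → 0 < μ A → 0 < μ B →
    ∃ r : ℕ, wordDistLE Φ μ A B r

/-- A sequence of Borel sets is asymptotically invariant for the family `Φ`. -/
def AsympInvariant (Φ : Set (PartialIso X)) (μ : Measure X) (A : ℕ → Set X) : Prop :=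
  ∀ m k, IsWord Φ m k →
    Tendsto (fun n => μ (m.toFun '' (A n ∩ m.dom) \ A n)) atTop (nhds 0)

/-- A sequence of Borel sets is nontrivial: measures uniformly bounded away from `0` and `1`. -/
def NontrivialSeq (μ : Measure X) (A : ℕ → Set X) : Prop :=
  ∃ δ : ℝ≥0∞, 0 < δ ∧ ∀ n, δ ≤ μ (A n) ∧ μ (A n) ≤ 1 - δ

/-- A countable Borel equivalence relation on `X`. -/
def IsCountableBorelER (R : Set (X × X)) : Prop :=
  MeasurableSet R ∧ Equivalence (fun x y => (x, y) ∈ R) ∧ ∀ x, {y | (x, y) ∈ R}.Countable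

/-- `μ` is quasi-invariant for `R` : partial isomorphisms of `R` map null sets to null sets. -/
def QuasiInvariant (μ : Measure X) (R : Set (X × X)) : Prop :=
  ∀ f : PartialIso X, f.IsInnerOf R → ∀ N ⊆ f.dom, MeasurableSet N → μ N = 0 →
    μ (f.toFun '' N) = 0

/-- `μ` is invariant for `R` : partial isomorphisms of `R` preserve the measure. -/
def InvariantMeasure (μ : Measure X) (R : Set (X × X)) : Prop :=
  ∀ f : PartialIso X, f.IsInnerOf R → ∀ A ⊆ f.dom, MeasurableSet A →
    μ (f.toFun '' A) = μ A

/-- `R` is ergodic for `μ` : every Borel saturated set is null or conull. -/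
def ErgodicRel (μ : Measure X) (R : Set (X × X)) : Prop :=
  ∀ A : Set X, MeasurableSet A → (∀ x ∈ A, ∀ y, (x, y) ∈ R → y ∈ A) →
    μ A = 0 ∨ μ Aᶜ = 0

/-- `Φ` is a graphing of `R` : a family of partial isomorphisms of `R` whose words connect
almost every pair of equivalent points. -/
def IsGraphing (Φ : Set (PartialIso X)) (μ : Measure X) (R : Set (X × X)) : Prop :=
  (∀ φ ∈ Φ, φ.IsInnerOf R) ∧
  ∀ᵐ x ∂μ, ∀ y, (x, y) ∈ R → ∃ m k, IsWord Φ m k ∧ x ∈ m.dom ∧ m.toFun x = y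

/-- A sequence of Borel sets is asymptotically invariant for the relation `R`. -/
def AsympInvariantRel (μ : Measure X) (R : Set (X × X)) (A : ℕ → Set X) : Prop :=
  ∀ f : PartialIso X, f.IsInnerOf R →
    Tendsto (fun n => μ (f.toFun '' (A n ∩ f.dom) \ A n)) atTop (nhds 0)

/-- `R` is strongly ergodic : every asymptotically invariant sequence is trivial. -/
def StronglyErgodic (μ : Measure X) (R : Set (X × X)) : Prop :=
  ¬ ∃ A : ℕ → Set X, (∀ n, MeasurableSet (A n)) ∧ AsympInvariantRel μ R A ∧
    NontrivialSeq μ A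

/-- The boundary `∂_Φ A` of a set `A` with respect to the family `Φ`. -/
def bdry (Φ : Set (PartialIso X)) (A : Set X) : Set X :=
  (⋃ φ ∈ Φ, φ.toFun '' (A ∩ φ.dom) ∪ φ.invFun '' (A ∩ φ.ran)) \ A

/-- A vanishing Følner sequence for the family `Φ`. -/
def VanishingFolner (Φ : Set (PartialIso X)) (μ : Measure X) (A : ℕ → Set X) : Prop :=
  (∀ n, MeasurableSet (A n)) ∧ (∀ n, 0 < μ (A n)) ∧
  Tendsto (fun n => μ (A n)) atTop (nhds 0) ∧
  Tendsto (fun n => μ (bdry Φ (A n)) / μ (A n)) atTop (nhds 0)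

/-- The equivalence relation generated by the family `Φ` : `(x, y) ∈ RGen Φ` iff `y = m x`
for some `Φ`-word `m`. -/
def RGen (Φ : Set (PartialIso X)) : Set (X × X) :=
  {p | ∃ m k, IsWord Φ m k ∧ p.1 ∈ m.dom ∧ m.toFun p.1 = p.2}

/-- The metric-measure space `(X, d_T, μ)` attached to the orbits of `T` is concentrated. -/
def ConcentratedOrbit {X : Type*} [MeasurableSpace X] (T : Equiv.Perm X) (μ : Measure X) :
    Prop :=
  ∀ δ : ℝ≥0∞, 0 < δ → ∃ r : ℕ, ∀ A B : Set X, MeasurableSet A → MeasurableSet B →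
    δ ≤ μ A → δ ≤ μ B →
    0 < μ {x ∈ A | ∃ k : ℤ, |k| ≤ (r : ℤ) ∧ (T ^ k) x ∈ B}

set_option linter.unusedSectionVars false
set_option linter.unusedVariables false

namespace Stmt12Aux

variable {X : Type*} [MeasurableSpace X]

/-- The `k`-th power of `T` as a function. -/
def S (T : Equiv.Perm X) (k : ℤ) : X → X := ⇑(T ^ k)

lemma S_add (T : Equiv.Perm X) (k l : ℤ) (x : X) : S T k (S T l x) = S T (k + l) x := by
  simp only [S, ← Equiv.Perm.mul_apply, ← zpow_add]

lemma S_zero (T : Equiv.Perm X) (x : X) : S T 0 x = x := by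
  simp [S]

lemma S_one (T : Equiv.Perm X) : S T 1 = ⇑T := by
  simp [S]

lemma S_neg_one (T : Equiv.Perm X) : S T (-1) = ⇑T.symm := by
  funext x; simp [S, zpow_neg, Equiv.Perm.inv_def]

variable {T : Equiv.Perm X} {μ : Measure X} [IsProbabilityMeasure μ]

lemma measurable_S (hT : Measurable T) (hT' : Measurable T.symm) (k : ℤ) :
    Measurable (S T k) := by
  induction k using Int.induction_on with
  | zero => simpa [S] using measurable_id
  | succ n ih =>
      have h : S T (n + 1) = S T n ∘ S T 1 := by
        funext x; simp [Function.comp, S_add]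
      rw [h, S_one]; exact ih.comp hT
  | pred n ih =>
      have h : S T (-n - 1) = S T (-n) ∘ S T (-1) := by
        funext x; simp only [Function.comp, S_add]; ring_nf
      rw [h, S_neg_one]; exact ih.comp hT'

lemma pre_T (hT : Measurable T)
    (hpres : ∀ A : Set X, MeasurableSet A → μ (T '' A) = μ A)
    {A : Set X} (hA : MeasurableSet A) : μ (⇑T ⁻¹' A) = μ A := by
  have h := hpres (⇑T ⁻¹' A) (hA.preimage hT)
  rw [Set.image_preimage_eq _ T.surjective] at h; exact h.symm

lemma pre_Tsymm (hpres : ∀ A : Set X, MeasurableSet A → μ (T '' A) = μ A)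
    {A : Set X} (hA : MeasurableSet A) : μ (⇑T.symm ⁻¹' A) = μ A := by
  rw [show ⇑T.symm ⁻¹' A = ⇑T '' A from (T.image_eq_preimage_symm A).symm]
  exact hpres A hA

lemma pre_S (hT : Measurable T) (hT' : Measurable T.symm)
    (hpres : ∀ A : Set X, MeasurableSet A → μ (T '' A) = μ A)
    (k : ℤ) {A : Set X} (hA : MeasurableSet A) : μ (S T k ⁻¹' A) = μ A := by
  induction k using Int.induction_on with
  | zero =>
      have : S T 0 ⁻¹' A = A := by ext x; simp [S_zero]
      rw [this]
  | succ n ih =>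
      have h : S T (n + 1) ⁻¹' A = ⇑T ⁻¹' (S T n ⁻¹' A) := by
        ext x; simp only [mem_preimage]
        rw [show S T n (T x) = S T (n+1) x from by rw [← S_one (T := T)]; rw [S_add]]
      rw [h, pre_T hT hpres (hA.preimage (measurable_S hT hT' n))]; exact ih
  | pred n ih =>
      have h : S T (-n - 1) ⁻¹' A = ⇑T.symm ⁻¹' (S T (-n) ⁻¹' A) := by
        ext x; simp only [mem_preimage]
        rw [show S T (-n) (T.symm x) = S T (-n-1) x from by
          rw [← S_neg_one (T := T)]; rw [S_add]; ring_nf]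
      rw [h, pre_Tsymm hpres (hA.preimage (measurable_S hT hT' (-n)))]; exact ih

lemma S_image_eq (k : ℤ) (A : Set X) : S T k '' A = S T (-k) ⁻¹' A := by
  have h1 : S T k '' A = ⇑(T ^ k).symm ⁻¹' A := (T ^ k).image_eq_preimage_symm A
  rw [h1]
  have : ⇑(T ^ k).symm = ⇑(T ^ (-k)) := by rw [zpow_neg, ← Equiv.Perm.inv_def]
  rw [show S T (-k) = ⇑(T ^ (-k)) from rfl, ← this]

lemma meas_S_image (hT : Measurable T) (hT' : Measurable T.symm) (k : ℤ) {A : Set X}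
    (hA : MeasurableSet A) : MeasurableSet (S T k '' A) := by
  rw [S_image_eq]; exact hA.preimage (measurable_S hT hT' _)

lemma img_S (hT : Measurable T) (hT' : Measurable T.symm)
    (hpres : ∀ A : Set X, MeasurableSet A → μ (T '' A) = μ A)
    (k : ℤ) {A : Set X} (hA : MeasurableSet A) : μ (S T k '' A) = μ A := by
  rw [S_image_eq]; exact pre_S hT hT' hpres _ hA

section Chunk2

variable {X : Type*} [MeasurableSpace X] {T : Equiv.Perm X} {μ : Measure X}
  [IsProbabilityMeasure μ]

/-- Points with a periodic orbit. -/
def Per (T : Equiv.Perm X) : Set X := {x | ∃ k : ℤ, k ≠ 0 ∧ S T k x = x}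

lemma meas_Per (hT : Measurable T) (hT' : Measurable T.symm)
    {f : X → ℝ} (hfm : Measurable f) (hfi : Function.Injective f) :
    MeasurableSet (Per T) := by
  have : Per T = ⋃ k : ℤ, ⋃ (_ : k ≠ 0), {x | f (S T k x) = f x} := by
    ext x
    simp only [Per, mem_iUnion, mem_setOf_eq]
    constructor
    · rintro ⟨k, hk, h⟩; exact ⟨k, hk, by rw [h]⟩
    · rintro ⟨k, hk, h⟩; exact ⟨k, hk, hfi h⟩
  rw [this]
  exact MeasurableSet.iUnion fun k => MeasurableSet.iUnion fun hk =>
    measurableSet_eq_fun (hfm.comp (measurable_S hT hT' k)) hfm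

lemma null_Per (haper : ∀ᵐ x ∂μ, ∀ k : ℤ, k ≠ 0 → (T ^ k) x ≠ x) : μ (Per T) = 0 := by
  rw [show Per T = {x | ¬ ∀ k : ℤ, k ≠ 0 → (T ^ k) x ≠ x} from by
    ext x; simp [Per, S]]
  exact haper

lemma poincare (hT : Measurable T) (hT' : Measurable T.symm)
    (hpres : ∀ A : Set X, MeasurableSet A → μ (T '' A) = μ A)
    {D : Set X} (hD : MeasurableSet D) (e : ℤ) (he : e = 1 ∨ e = -1) (M : ℕ) :
    μ {y | y ∈ D ∧ ∀ j : ℕ, M < j → S T (e * j) y ∉ D} = 0 := by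
  set E := {y | y ∈ D ∧ ∀ j : ℕ, M < j → S T (e * j) y ∉ D} with hEdef
  have hEm : MeasurableSet E := by
    have : E = D ∩ ⋂ (j : ℕ), ⋂ (_ : M < j), S T (e * j) ⁻¹' Dᶜ := by
      ext y; simp [hEdef, mem_iInter, mem_preimage]
    rw [this]
    exact hD.inter <| MeasurableSet.iInter fun j => MeasurableSet.iInter fun _ =>
      (hD.compl).preimage (measurable_S hT hT' _)
  by_contra hne
  have hdisj : Pairwise (Function.onFun Disjoint fun m : ℕ => S T (e * (M+1) * m) ⁻¹' E) := by
    have key : ∀ m m' : ℕ, m < m' →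
        Disjoint (S T (e * (M+1) * m) ⁻¹' E) (S T (e * (M+1) * m') ⁻¹' E) := by
      intro m m' hmm'
      rw [Set.disjoint_left]
      intro x hx hx'
      simp only [mem_preimage] at hx hx'
      have hyD : S T (e * (M+1) * m) x ∈ E := hx
      set y := S T (e * (M+1) * m) x with hy
      have harith : S T (e * ((M+1) * (m' - m) : ℕ)) y = S T (e * (M+1) * m') x := by
        rw [hy, S_add]
        congr 1
        have : ((m' - m : ℕ) : ℤ) = (m' : ℤ) - m := by
          have := Nat.cast_sub (le_of_lt hmm') (R := ℤ); omega
        push_cast [this]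
        ring
      have hj : M < (M+1) * (m' - m) := by
        have : 1 ≤ m' - m := by omega
        calc M < M + 1 := by omega
        _ ≤ (M+1) * (m' - m) := by nlinarith
      exact hyD.2 ((M+1) * (m' - m)) hj (by rw [harith]; exact hx'.1)
    intro m m' hne'
    rcases lt_or_gt_of_ne hne' with h | h
    · exact key m m' h
    · exact (key m' m h).symm
  have hmeas : ∀ m : ℕ, MeasurableSet (S T (e * (M+1) * m) ⁻¹' E) := fun m =>
    hEm.preimage (measurable_S hT hT' _)
  have hsum := measure_iUnion (μ := μ) hdisj hmeas
  have heq : ∀ m : ℕ, μ (S T (e * (M+1) * m) ⁻¹' E) = μ E := fun m =>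
    pre_S hT hT' hpres _ hEm
  rw [tsum_congr heq] at hsum
  have htop : (∑' _ : ℕ, μ E) = ⊤ := ENNReal.tsum_const_eq_top_of_ne_zero hne
  have hle : μ (⋃ m : ℕ, S T (e * (M+1) * m) ⁻¹' E) ≤ 1 := prob_le_one
  rw [hsum, htop] at hle
  simp at hle

/-- Saturation of a set under the `T`-orbit equivalence. -/
def Sat (T : Equiv.Perm X) (E : Set X) : Set X := ⋃ k : ℤ, S T k '' E

lemma null_Sat (hT : Measurable T) (hT' : Measurable T.symm)
    (hpres : ∀ A : Set X, MeasurableSet A → μ (T '' A) = μ A)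
    {E : Set X} (hEm : MeasurableSet E) (hE : μ E = 0) : μ (Sat T E) = 0 :=
  measure_iUnion_null fun k => by rw [img_S hT hT' hpres k hEm]; exact hE

lemma mem_Sat {E : Set X} {x : X} (k : ℤ) (hx : S T k x ∈ E) : x ∈ Sat T E := by
  refine mem_iUnion.2 ⟨-k, ⟨S T k x, hx, ?_⟩⟩
  rw [S_add]; simp [S_zero]

lemma subset_Sat (E : Set X) : E ⊆ Sat T E := fun x hx =>
  mem_Sat 0 (by rwa [S_zero])

end Chunk2

section Chunk3

variable {X : Type*} [MeasurableSpace X] {T : Equiv.Perm X} {μ : Measure X}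
  [IsProbabilityMeasure μ]

/-- First forward return time to `D` (0 if none). -/
noncomputable def retF (T : Equiv.Perm X) (D : Set X) (x : X) : ℕ := sInf {j : ℕ | 0 < j ∧ S T j x ∈ D}

/-- First backward return time to `D` (0 if none). -/
noncomputable def retB (T : Equiv.Perm X) (D : Set X) (x : X) : ℕ := sInf {j : ℕ | 0 < j ∧ S T (-j) x ∈ D}

/-- First forward return map. -/
noncomputable def nxt (T : Equiv.Perm X) (D : Set X) (x : X) : X := S T (retF T D x) x

/-- First backward return map. -/
noncomputable def prv (T : Equiv.Perm X) (D : Set X) (x : X) : X := S T (-(retB T D x)) x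

/-- The bad (null) set of `D`. -/
def Zbad (T : Equiv.Perm X) (D : Set X) : Set X :=
  {y | y ∈ D ∧ ∀ j : ℕ, 0 < j → S T (1 * j) y ∉ D} ∪
  {y | y ∈ D ∧ ∀ j : ℕ, 0 < j → S T ((-1) * j) y ∉ D} ∪ Per T

/-- The good part of `D`. -/
def Good (T : Equiv.Perm X) (D : Set X) : Set X := D \ Sat T (Zbad T D)

lemma good_subset {D : Set X} : Good T D ⊆ D := diff_subset

lemma meas_Zbad (hT : Measurable T) (hT' : Measurable T.symm)
    {f : X → ℝ} (hfm : Measurable f) (hfi : Function.Injective f)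
    {D : Set X} (hD : MeasurableSet D) : MeasurableSet (Zbad T D) := by
  have h1 : ∀ e : ℤ, MeasurableSet {y | y ∈ D ∧ ∀ j : ℕ, 0 < j → S T (e * j) y ∉ D} := by
    intro e
    have : {y | y ∈ D ∧ ∀ j : ℕ, 0 < j → S T (e * j) y ∉ D}
        = D ∩ ⋂ (j : ℕ), ⋂ (_ : 0 < j), S T (e * j) ⁻¹' Dᶜ := by
      ext y; simp [mem_iInter, mem_preimage]
    rw [this]
    exact hD.inter <| MeasurableSet.iInter fun j => MeasurableSet.iInter fun _ =>
      (hD.compl).preimage (measurable_S hT hT' _)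
  exact ((h1 1).union (h1 (-1))).union (meas_Per hT hT' hfm hfi)

lemma null_Zbad (hT : Measurable T) (hT' : Measurable T.symm)
    (hpres : ∀ A : Set X, MeasurableSet A → μ (T '' A) = μ A)
    (haper : ∀ᵐ x ∂μ, ∀ k : ℤ, k ≠ 0 → (T ^ k) x ≠ x)
    {D : Set X} (hD : MeasurableSet D) : μ (Zbad T D) = 0 := by
  refine measure_union_null (measure_union_null ?_ ?_) (null_Per haper)
  · simpa using poincare hT hT' hpres hD 1 (Or.inl rfl) 0
  · simpa using poincare hT hT' hpres hD (-1) (Or.inr rfl) 0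

lemma meas_Good (hT : Measurable T) (hT' : Measurable T.symm)
    {f : X → ℝ} (hfm : Measurable f) (hfi : Function.Injective f)
    {D : Set X} (hD : MeasurableSet D) : MeasurableSet (Good T D) :=
  hD.diff <| MeasurableSet.iUnion fun k =>
    meas_S_image hT hT' k (meas_Zbad hT hT' hfm hfi hD)

lemma null_Good_compl (hT : Measurable T) (hT' : Measurable T.symm)
    (hpres : ∀ A : Set X, MeasurableSet A → μ (T '' A) = μ A)
    (haper : ∀ᵐ x ∂μ, ∀ k : ℤ, k ≠ 0 → (T ^ k) x ≠ x)
    {f : X → ℝ} (hfm : Measurable f) (hfi : Function.Injective f)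
    {D : Set X} (hD : MeasurableSet D) : μ (D \ Good T D) = 0 := by
  have : D \ Good T D ⊆ Sat T (Zbad T D) := fun x hx => by
    rcases hx with ⟨hxD, hxn⟩
    by_contra h
    exact hxn ⟨hxD, h⟩
  exact measure_mono_null this
    (null_Sat hT hT' hpres (meas_Zbad hT hT' hfm hfi hD) (null_Zbad hT hT' hpres haper hD))

lemma good_orbit {D : Set X} {x : X} (hx : x ∈ Good T D) (k : ℤ)
    (hk : S T k x ∈ D) : S T k x ∈ Good T D := by
  refine ⟨hk, fun h => hx.2 ?_⟩
  rcases mem_iUnion.1 h with ⟨l, z, hz, hl⟩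
  refine mem_iUnion.2 ⟨-k + l, z, hz, ?_⟩
  have h2 : S T (-k + l) z = S T (-k) (S T l z) := (S_add T (-k) l z).symm
  rw [h2, hl, S_add, neg_add_cancel, S_zero]

lemma good_aper {D : Set X} {x : X} (hx : x ∈ Good T D) (k : ℤ) (hk : k ≠ 0) :
    S T k x ≠ x := by
  intro h
  exact hx.2 (subset_Sat _ (Or.inr ⟨k, hk, h⟩))

lemma good_notZ {D : Set X} {x : X} (hx : x ∈ Good T D) : x ∉ Zbad T D :=
  fun h => hx.2 (subset_Sat _ h)

lemma good_retF {D : Set X} {x : X} (hx : x ∈ Good T D) :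
    0 < retF T D x ∧ S T (retF T D x) x ∈ D ∧
      ∀ i : ℕ, 0 < i → i < retF T D x → S T i x ∉ D := by
  have hne : {j : ℕ | 0 < j ∧ S T j x ∈ D}.Nonempty := by
    by_contra h
    rw [Set.not_nonempty_iff_eq_empty] at h
    refine good_notZ hx (Or.inl (Or.inl ⟨hx.1, fun j hj hjD => ?_⟩))
    rw [one_mul] at hjD
    exact (Set.eq_empty_iff_forall_notMem.1 h j) ⟨hj, hjD⟩
  have hmem := Nat.sInf_mem hne
  refine ⟨hmem.1, hmem.2, fun i hi hilt hiD => ?_⟩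
  have h2 : i ∈ {j : ℕ | 0 < j ∧ S T (j : ℤ) x ∈ D} := ⟨hi, hiD⟩
  have h3 : retF T D x ≤ i := Nat.sInf_le h2
  omega

lemma good_retB {D : Set X} {x : X} (hx : x ∈ Good T D) :
    0 < retB T D x ∧ S T (-(retB T D x)) x ∈ D ∧
      ∀ i : ℕ, 0 < i → i < retB T D x → S T (-i) x ∉ D := by
  have hne : {j : ℕ | 0 < j ∧ S T (-j) x ∈ D}.Nonempty := by
    by_contra h
    rw [Set.not_nonempty_iff_eq_empty] at h
    refine good_notZ hx (Or.inl (Or.inr ⟨hx.1, fun j hj hjD => ?_⟩))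
    rw [show ((-1 : ℤ)) * j = -(j : ℤ) from by ring] at hjD
    exact (Set.eq_empty_iff_forall_notMem.1 h j) ⟨hj, hjD⟩
  have hmem := Nat.sInf_mem hne
  refine ⟨hmem.1, hmem.2, fun i hi hilt hiD => ?_⟩
  have h2 : i ∈ {j : ℕ | 0 < j ∧ S T (-(j : ℤ)) x ∈ D} := ⟨hi, hiD⟩
  have h3 : retB T D x ≤ i := Nat.sInf_le h2
  omega

lemma good_nxt {D : Set X} {x : X} (hx : x ∈ Good T D) : nxt T D x ∈ Good T D :=
  good_orbit hx _ (good_retF hx).2.1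

lemma good_prv {D : Set X} {x : X} (hx : x ∈ Good T D) : prv T D x ∈ Good T D :=
  good_orbit hx _ (good_retB hx).2.1

lemma good_nxt_ne {D : Set X} {x : X} (hx : x ∈ Good T D) : nxt T D x ≠ x := by
  have h := (good_retF hx).1
  exact good_aper hx (retF T D x) (by exact_mod_cast Nat.pos_iff_ne_zero.mp h)

lemma good_prv_ne {D : Set X} {x : X} (hx : x ∈ Good T D) : prv T D x ≠ x := by
  have h := (good_retB hx).1
  exact good_aper hx (-(retB T D x : ℤ))
    (by simp only [ne_eq, neg_eq_zero, Nat.cast_eq_zero]; omega)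

lemma good_prv_nxt {D : Set X} {x : X} (hx : x ∈ Good T D) : prv T D (nxt T D x) = x := by
  obtain ⟨hpos, hmem, hmin⟩ := good_retF hx
  set ρ := retF T D x with hρ
  have hxeq : S T (-(ρ : ℤ)) (nxt T D x) = x := by
    rw [nxt, S_add]; simp [hρ, S_zero]
  have hretB : retB T D (nxt T D x) = ρ := by
    apply le_antisymm
    · exact Nat.sInf_le ⟨hpos, by rw [hxeq]; exact hx.1⟩
    · by_contra hlt
      push_neg at hlt
      have hnein : retB T D (nxt T D x) ∈ {j : ℕ | 0 < j ∧ S T (-(j:ℤ)) (nxt T D x) ∈ D} :=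
        Nat.sInf_mem ⟨ρ, hpos, by rw [hxeq]; exact hx.1⟩
      obtain ⟨hjpos, hjmem⟩ := hnein
      set j := retB T D (nxt T D x)
      have : S T ((ρ : ℤ) - j) x ∈ D := by
        have : S T (-(j:ℤ)) (nxt T D x) = S T ((ρ:ℤ) - j) x := by
          rw [nxt, S_add]; congr 1; ring
        rwa [this] at hjmem
      have hcast : ((ρ - j : ℕ) : ℤ) = (ρ : ℤ) - j := by omega
      exact hmin (ρ - j) (by omega) (by omega) (by rw [hcast]; exact this)
  show S T (-(retB T D (nxt T D x) : ℤ)) (nxt T D x) = x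
  rw [hretB]; exact hxeq

lemma good_nxt_prv {D : Set X} {x : X} (hx : x ∈ Good T D) : nxt T D (prv T D x) = x := by
  obtain ⟨hpos, hmem, hmin⟩ := good_retB hx
  set ρ := retB T D x with hρ
  have hxeq : S T (ρ : ℤ) (prv T D x) = x := by
    rw [prv, S_add]; simp [hρ, S_zero]
  have hretF : retF T D (prv T D x) = ρ := by
    apply le_antisymm
    · exact Nat.sInf_le ⟨hpos, by rw [hxeq]; exact hx.1⟩
    · by_contra hlt
      push_neg at hlt
      have hnein : retF T D (prv T D x) ∈ {j : ℕ | 0 < j ∧ S T (j:ℤ) (prv T D x) ∈ D} :=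
        Nat.sInf_mem ⟨ρ, hpos, by rw [hxeq]; exact hx.1⟩
      obtain ⟨hjpos, hjmem⟩ := hnein
      set j := retF T D (prv T D x)
      have : S T ((j : ℤ) - ρ) x ∈ D := by
        have : S T (j:ℤ) (prv T D x) = S T ((j:ℤ) - ρ) x := by
          rw [prv, S_add]; congr 1; try ring
        rwa [this] at hjmem
      have hcast : ((ρ - j : ℕ) : ℤ) = (ρ : ℤ) - j := by omega
      have : S T (-((ρ - j : ℕ) : ℤ)) x ∈ D := by
        rw [hcast, neg_sub]; exact this
      exact hmin (ρ - j) (by omega) (by omega) this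
  show S T ((retF T D (prv T D x) : ℤ)) (prv T D x) = x
  rw [hretF]; exact hxeq

end Chunk3

section Chunk4

variable {X : Type*} [MeasurableSpace X] {T : Equiv.Perm X} {μ : Measure X}
  [IsProbabilityMeasure μ]

lemma meas_sInf_eq {g : ℕ → X → Prop} (hg : ∀ i, MeasurableSet {x | g i x}) (j : ℕ) :
    MeasurableSet {x | sInf {i : ℕ | 0 < i ∧ g i x} = j} := by
  rcases Nat.eq_zero_or_pos j with hj | hj
  · subst hj
    have hset : {x | sInf {i : ℕ | 0 < i ∧ g i x} = 0}
        = ⋂ (i : ℕ), ⋂ (_ : 0 < i), {x | g i x}ᶜ := by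
      ext x
      simp only [mem_setOf_eq, mem_iInter, mem_compl_iff, Nat.sInf_eq_zero]
      constructor
      · rintro (⟨h0, _⟩ | hemp)
        · exact absurd h0 (lt_irrefl 0)
        · intro i hi hgi
          exact (eq_empty_iff_forall_notMem.mp hemp i) ⟨hi, hgi⟩
      · intro h
        right
        exact eq_empty_iff_forall_notMem.mpr fun i hi => h i hi.1 hi.2
    rw [hset]
    exact MeasurableSet.iInter fun i => MeasurableSet.iInter fun _ => (hg i).compl
  · have hset : {x | sInf {i : ℕ | 0 < i ∧ g i x} = j}
        = {x | g j x} ∩ ⋂ (i : ℕ), ⋂ (_ : 0 < i), ⋂ (_ : i < j), {x | g i x}ᶜ := by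
      ext x
      simp only [mem_setOf_eq, mem_inter_iff, mem_iInter, mem_compl_iff]
      constructor
      · intro h
        have hne : {i : ℕ | 0 < i ∧ g i x}.Nonempty := by
          by_contra hemp
          rw [not_nonempty_iff_eq_empty] at hemp
          rw [hemp, Nat.sInf_empty] at h
          omega
        have hmem := Nat.sInf_mem hne
        rw [h] at hmem
        refine ⟨hmem.2, fun i hi hij hgi => ?_⟩
        have hle := Nat.sInf_le (show i ∈ {i : ℕ | 0 < i ∧ g i x} from ⟨hi, hgi⟩)
        omega
      · rintro ⟨hgj, hmin⟩
        apply le_antisymm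
        · exact Nat.sInf_le ⟨hj, hgj⟩
        · by_contra hlt
          push_neg at hlt
          have hne : {i : ℕ | 0 < i ∧ g i x}.Nonempty := ⟨j, hj, hgj⟩
          have hmem := Nat.sInf_mem hne
          exact hmin _ hmem.1 hlt hmem.2
    rw [hset]
    exact (hg j).inter <| MeasurableSet.iInter fun i => MeasurableSet.iInter fun _ =>
      MeasurableSet.iInter fun _ => (hg i).compl

lemma meas_retF_eq (hT : Measurable T) (hT' : Measurable T.symm)
    {D : Set X} (hD : MeasurableSet D) (j : ℕ) :
    MeasurableSet {x | retF T D x = j} :=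
  meas_sInf_eq (g := fun i x => S T (i : ℤ) x ∈ D)
    (fun i => hD.preimage (measurable_S hT hT' _)) j

lemma meas_retB_eq (hT : Measurable T) (hT' : Measurable T.symm)
    {D : Set X} (hD : MeasurableSet D) (j : ℕ) :
    MeasurableSet {x | retB T D x = j} :=
  meas_sInf_eq (g := fun i x => S T (-(i : ℤ)) x ∈ D)
    (fun i => hD.preimage (measurable_S hT hT' _)) j

lemma measurable_nxt (hT : Measurable T) (hT' : Measurable T.symm)
    {D : Set X} (hD : MeasurableSet D) : Measurable (nxt T D) := by
  intro t ht
  have hun : nxt T D ⁻¹' t = ⋃ j : ℕ, ({x | retF T D x = j} ∩ S T j ⁻¹' t) := by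
    ext x
    simp only [mem_preimage, mem_iUnion, mem_inter_iff, mem_setOf_eq]
    constructor
    · intro h
      exact ⟨retF T D x, rfl, h⟩
    · rintro ⟨j, hj, hx⟩
      show nxt T D x ∈ t
      rw [nxt, hj]
      exact hx
  rw [hun]
  exact MeasurableSet.iUnion fun j =>
    (meas_retF_eq hT hT' hD j).inter (ht.preimage (measurable_S hT hT' _))

lemma measurable_prv (hT : Measurable T) (hT' : Measurable T.symm)
    {D : Set X} (hD : MeasurableSet D) : Measurable (prv T D) := by
  intro t ht
  have hun : prv T D ⁻¹' t = ⋃ j : ℕ, ({x | retB T D x = j} ∩ S T (-(j:ℤ)) ⁻¹' t) := by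
    ext x
    simp only [mem_preimage, mem_iUnion, mem_inter_iff, mem_setOf_eq]
    constructor
    · intro h
      exact ⟨retB T D x, rfl, h⟩
    · rintro ⟨j, hj, hx⟩
      show prv T D x ∈ t
      rw [prv, hj]
      exact hx
  rw [hun]
  exact MeasurableSet.iUnion fun j =>
    (meas_retB_eq hT hT' hD j).inter (ht.preimage (measurable_S hT hT' _))

lemma img_nxt (hT : Measurable T) (hT' : Measurable T.symm)
    (hpres : ∀ A : Set X, MeasurableSet A → μ (T '' A) = μ A)
    {D : Set X} (hD : MeasurableSet D) {A : Set X} (hA : MeasurableSet A)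
    (hAG : A ⊆ Good T D) :
    MeasurableSet (nxt T D '' A) ∧ μ (nxt T D '' A) = μ A := by
  set pc : ℕ → Set X := fun j => A ∩ {x | retF T D x = j} with hpcdef
  have hpc : ∀ j : ℕ, MeasurableSet (pc j) := fun j => hA.inter (meas_retF_eq hT hT' hD j)
  have hun : nxt T D '' A = ⋃ j : ℕ, S T j '' pc j := by
    ext z
    constructor
    · rintro ⟨x, hxA, rfl⟩
      exact mem_iUnion.2 ⟨retF T D x, x, ⟨hxA, rfl⟩, rfl⟩
    · intro h
      rcases mem_iUnion.1 h with ⟨j, x, ⟨hxA, hj⟩, rfl⟩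
      exact ⟨x, hxA, by rw [nxt, hj]⟩
  have hdisj : Pairwise (Function.onFun Disjoint fun j : ℕ => S T j '' pc j) := by
    have key : ∀ j j' : ℕ, j < j' → Disjoint (S T j '' pc j) (S T j' '' pc j') := by
      intro j j' hlt
      rw [Set.disjoint_left]
      rintro z ⟨x, ⟨hxA, hjx⟩, rfl⟩ ⟨y, ⟨hyA, hjy⟩, hzy⟩
      have hxG := hAG hxA
      have hyG := hAG hyA
      have hj0 : 0 < j := by
        have := (good_retF hxG).1; simp only [mem_setOf_eq] at hjx; omega
      have hx_eq : S T ((j' : ℤ) - j) y = x := by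
        have h1 : S T (-(j:ℤ)) (S T (j':ℤ) y) = S T (-(j:ℤ) + j') y := S_add T _ _ y
        have h2 : S T (-(j:ℤ)) (S T (j:ℤ) x) = x := by
          rw [S_add, neg_add_cancel, S_zero]
        rw [← hzy] at h2
        rw [h1] at h2
        rw [show (j' : ℤ) - j = -(j:ℤ) + j' from by ring]
        exact h2
      have hcast : (((j' - j : ℕ)) : ℤ) = (j' : ℤ) - j := by omega
      have hmemD : S T (((j' - j : ℕ)) : ℤ) y ∈ D := by
        rw [hcast, hx_eq]
        exact good_subset hxG
      simp only [mem_setOf_eq] at hjy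
      have hminy := (good_retF hyG).2.2
      rw [hjy] at hminy
      exact hminy (j' - j) (by omega) (by omega) hmemD
    intro m m' hne
    rcases lt_or_gt_of_ne hne with h | h
    · exact key m m' h
    · exact (key m' m h).symm
  have hmeasjs : ∀ j : ℕ, MeasurableSet (S T (j:ℤ) '' pc j) := fun j =>
    meas_S_image hT hT' _ (hpc j)
  have hμu := measure_iUnion (μ := μ) hdisj hmeasjs
  have himg : ∀ j : ℕ, μ (S T (j:ℤ) '' pc j) = μ (pc j) := fun j => img_S hT hT' hpres _ (hpc j)
  rw [tsum_congr himg] at hμu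
  have hpart : (⋃ j : ℕ, pc j) = A := by
    ext x
    simp only [hpcdef, mem_iUnion, mem_inter_iff, mem_setOf_eq]
    constructor
    · rintro ⟨j, hj, _⟩; exact hj
    · intro h; exact ⟨retF T D x, h, rfl⟩
  have hdisj2 : Pairwise (Function.onFun Disjoint pc) := by
    intro m m' hne
    rw [Function.onFun, Set.disjoint_left]
    rintro x ⟨_, h1⟩ ⟨_, h2⟩
    simp only [mem_setOf_eq] at h1 h2
    exact hne (h1 ▸ h2 ▸ rfl)
  have hμ2 := measure_iUnion (μ := μ) hdisj2 hpc
  rw [hpart] at hμ2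
  constructor
  · rw [hun]; exact MeasurableSet.iUnion hmeasjs
  · rw [hun, hμu, ← hμ2]

end Chunk4

section Chunk5

variable {X : Type*} [MeasurableSpace X] {T : Equiv.Perm X} {μ : Measure X}
  [IsProbabilityMeasure μ]

/-- The set of points whose forward `nxt`-orbit is strictly `g`-decreasing. -/
def Wset (T : Equiv.Perm X) (D : Set X) (g : X → ℝ) : Set X :=
  Good T D ∩ ⋂ m : ℕ, {y | g ((nxt T D)^[m+1] y) < g ((nxt T D)^[m] y)}

lemma meas_Wset (hT : Measurable T) (hT' : Measurable T.symm)
    {f : X → ℝ} (hfm : Measurable f) (hfi : Function.Injective f)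
    {D : Set X} (hD : MeasurableSet D) {g : X → ℝ} (hg : Measurable g) :
    MeasurableSet (Wset T D g) :=
  (meas_Good hT hT' hfm hfi hD).inter <| MeasurableSet.iInter fun m =>
    measurableSet_lt (hg.comp ((measurable_nxt hT hT' hD).iterate _))
      (hg.comp ((measurable_nxt hT hT' hD).iterate _))

lemma Wset_dec {D : Set X} {g : X → ℝ} {y : X} (hy : y ∈ Wset T D g) :
    g (nxt T D y) < g y := by
  have := (mem_iInter.1 hy.2) 0
  simpa using this

lemma null_Wset (hT : Measurable T) (hT' : Measurable T.symm)
    (hpres : ∀ A : Set X, MeasurableSet A → μ (T '' A) = μ A)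
    {f : X → ℝ} (hfm : Measurable f) (hfi : Function.Injective f)
    {D : Set X} (hD : MeasurableSet D) {g : X → ℝ} (hg : Measurable g) :
    μ (Wset T D g) = 0 := by
  set W := Wset T D g with hWdef
  have hWG : W ⊆ Good T D := inter_subset_left
  have hWm : MeasurableSet W := meas_Wset hT hT' hfm hfi hD hg
  have hnxtW : ∀ y ∈ W, nxt T D y ∈ W := by
    rintro y ⟨hyG, hym⟩
    refine ⟨good_nxt hyG, ?_⟩
    simp only [mem_iInter, mem_setOf_eq] at hym ⊢
    intro m
    rw [← Function.iterate_succ_apply, ← Function.iterate_succ_apply]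
    exact hym (m+1)
  have hWimg := img_nxt hT hT' hpres hD hWm hWG
  have hWsub : nxt T D '' W ⊆ W := by
    rintro z ⟨y, hy, rfl⟩
    exact hnxtW y hy
  have hdiff0 : μ (W \ nxt T D '' W) = 0 := by
    rw [measure_diff hWsub hWimg.1.nullMeasurableSet (measure_ne_top μ _), hWimg.2,
      tsub_self]
  have hNc : ∀ c : ℚ,
      μ ((W ∩ {y | (c:ℝ) < g y}) ∩ (nxt T D) ⁻¹' {y | (c:ℝ) < g y}ᶜ) = 0 := by
    intro c
    set V := W ∩ {y | (c:ℝ) < g y} with hVdef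
    have hVm : MeasurableSet V := hWm.inter (measurableSet_lt measurable_const hg)
    have hVG : V ⊆ Good T D := fun y hy => hWG hy.1
    have hVimg := img_nxt hT hT' hpres hD hVm hVG
    have hVd : μ (V \ nxt T D '' V) = 0 := by
      apply measure_mono_null ?_ hdiff0
      rintro y ⟨⟨hyW, hyc⟩, hyn⟩
      refine ⟨hyW, fun hyi => hyn ?_⟩
      rcases hyi with ⟨z, hzW, rfl⟩
      have hdec : g (nxt T D z) < g z := Wset_dec hzW
      exact ⟨z, ⟨hzW, lt_trans hyc hdec⟩, rfl⟩
    have hVin : μ (nxt T D '' V \ V) = 0 := by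
      have h1 := measure_inter_add_diff (μ := μ) V hVimg.1
      have h2 := measure_inter_add_diff (μ := μ) (nxt T D '' V) hVm
      rw [hVd, add_zero] at h1
      rw [Set.inter_comm, h1, hVimg.2] at h2
      have hfin : μ V ≠ ∞ := measure_ne_top μ V
      nth_rewrite 2 [← add_zero (μ V)] at h2
      exact (ENNReal.add_right_inj hfin).1 h2
    set N := V ∩ (nxt T D) ⁻¹' {y | (c:ℝ) < g y}ᶜ with hNdef
    have hNm : MeasurableSet N := hVm.inter
      (((measurableSet_lt measurable_const hg).compl).preimage (measurable_nxt hT hT' hD))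
    have hNG : N ⊆ Good T D := fun y hy => hVG hy.1
    have hNimg := img_nxt hT hT' hpres hD hNm hNG
    have hNsub : nxt T D '' N ⊆ nxt T D '' V \ V := by
      rintro z ⟨y, ⟨hyV, hyn⟩, rfl⟩
      exact ⟨⟨y, hyV, rfl⟩, fun hzV => hyn hzV.2⟩
    have : μ (nxt T D '' N) = 0 := measure_mono_null hNsub hVin
    rw [← hNimg.2]
    exact this
  have hcover : W ⊆ ⋃ c : ℚ, (W ∩ {y | (c:ℝ) < g y}) ∩ (nxt T D) ⁻¹' {y | (c:ℝ) < g y}ᶜ := by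
    intro y hyW
    have hdec : g (nxt T D y) < g y := Wset_dec hyW
    obtain ⟨c, hc1, hc2⟩ := exists_rat_btwn hdec
    refine mem_iUnion.2 ⟨c, ⟨⟨hyW, hc2⟩, ?_⟩⟩
    simp only [mem_preimage, mem_compl_iff, mem_setOf_eq]
    exact not_lt.2 (le_of_lt hc1)
  exact measure_mono_null hcover (measure_iUnion_null fun c => hNc c)

end Chunk5

section Chunk6

variable {X : Type*} [MeasurableSpace X] {T : Equiv.Perm X} {μ : Measure X}
  [IsProbabilityMeasure μ]

/-- Local minima of `f` along first-return orbits. -/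
def NextMin (T : Equiv.Perm X) (D : Set X) (f : X → ℝ) : Set X :=
  Good T D ∩ {x | f x < f (nxt T D x) ∧ f x < f (prv T D x)}

lemma meas_NextMin (hT : Measurable T) (hT' : Measurable T.symm)
    {f : X → ℝ} (hfm : Measurable f) (hfi : Function.Injective f)
    {D : Set X} (hD : MeasurableSet D) : MeasurableSet (NextMin T D f) :=
  (meas_Good hT hT' hfm hfi hD).inter
    ((measurableSet_lt hfm (hfm.comp (measurable_nxt hT hT' hD))).inter
      (measurableSet_lt hfm (hfm.comp (measurable_prv hT hT' hD))))

lemma NextMin_subset {D : Set X} {f : X → ℝ} : NextMin T D f ⊆ Good T D :=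
  inter_subset_left

lemma half_NextMin (hT : Measurable T) (hT' : Measurable T.symm)
    (hpres : ∀ A : Set X, MeasurableSet A → μ (T '' A) = μ A)
    {f : X → ℝ} (hfm : Measurable f) (hfi : Function.Injective f)
    {D : Set X} (hD : MeasurableSet D) :
    μ (NextMin T D f) + μ (NextMin T D f) ≤ μ D := by
  set C := NextMin T D f with hCdef
  have hCm : MeasurableSet C := meas_NextMin hT hT' hfm hfi hD
  have hCG : C ⊆ Good T D := NextMin_subset
  have hCimg := img_nxt hT hT' hpres hD hCm hCG
  have hdisj : Disjoint C (nxt T D '' C) := by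
    rw [Set.disjoint_left]
    rintro z hzC ⟨y, hyC, rfl⟩
    have h1 : prv T D (nxt T D y) = y := good_prv_nxt (hCG hyC)
    have h2 : f (nxt T D y) < f y := by
      have := hzC.2.2
      rwa [h1] at this
    exact absurd hyC.2.1 (not_lt.2 (le_of_lt h2))
  have hsub : C ∪ nxt T D '' C ⊆ D := by
    apply Set.union_subset (hCG.trans good_subset)
    rintro z ⟨y, hy, rfl⟩
    exact good_subset (good_nxt (hCG hy))
  calc μ C + μ C = μ C + μ (nxt T D '' C) := by rw [hCimg.2]
  _ = μ (C ∪ nxt T D '' C) := (measure_union hdisj hCimg.1).symm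
  _ ≤ μ D := measure_mono hsub

lemma nxt_iter_good {D : Set X} {y : X} (hy : y ∈ Good T D) (m : ℕ) :
    (nxt T D)^[m] y ∈ Good T D ∧ ∃ κ : ℤ, (nxt T D)^[m] y = S T κ y := by
  induction m with
  | zero => exact ⟨hy, 0, (S_zero T y).symm⟩
  | succ m ih =>
    obtain ⟨hG, κ, hκ⟩ := ih
    refine ⟨?_, ?_⟩
    · rw [Function.iterate_succ_apply']
      exact good_nxt hG
    · obtain ⟨ρ, hρ⟩ : ∃ ρ : ℕ, retF T D ((nxt T D)^[m] y) = ρ := ⟨_, rfl⟩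
      refine ⟨(ρ : ℤ) + κ, ?_⟩
      rw [Function.iterate_succ_apply']
      show S T (retF T D ((nxt T D)^[m] y)) ((nxt T D)^[m] y) = _
      rw [hρ, hκ, S_add]

lemma orbit_reach (hT : Measurable T) (hT' : Measurable T.symm)
    (hpres : ∀ A : Set X, MeasurableSet A → μ (T '' A) = μ A)
    (haper : ∀ᵐ x ∂μ, ∀ k : ℤ, k ≠ 0 → (T ^ k) x ≠ x)
    {f : X → ℝ} (hfm : Measurable f) (hfi : Function.Injective f)
    {D : Set X} (hD : MeasurableSet D) :
    ∀ᵐ x ∂μ, (∃ k : ℤ, S T k x ∈ D) → ∃ k : ℤ, S T k x ∈ NextMin T D f := by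
  set BigBad := (D \ Good T D) ∪ (Wset T D f ∪ Wset T D (fun x => - f x)) with hBBdef
  have hBBm : MeasurableSet BigBad :=
    ((hD.diff (meas_Good hT hT' hfm hfi hD)).union
      ((meas_Wset hT hT' hfm hfi hD hfm).union (meas_Wset hT hT' hfm hfi hD hfm.neg)))
  have hBBnull : μ BigBad = 0 := by
    refine measure_union_null (null_Good_compl hT hT' hpres haper hfm hfi hD) ?_
    exact measure_union_null (null_Wset hT hT' hpres hfm hfi hD hfm)
      (null_Wset hT hT' hpres hfm hfi hD hfm.neg)
  have hSatnull : μ (Sat T BigBad) = 0 := null_Sat hT hT' hpres hBBm hBBnull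
  filter_upwards [(measure_eq_zero_iff_ae_notMem (μ := μ)).mp hSatnull] with x hx
  rintro ⟨k, hk⟩
  set y := S T k x with hydef
  have hyG : y ∈ Good T D := by
    by_contra hn
    exact hx (mem_Sat k (Or.inl ⟨hk, hn⟩))
  have hxW : ∀ κ : ℤ, S T κ y ∉ Wset T D f ∧ S T κ y ∉ Wset T D (fun x => -f x) := by
    intro κ
    constructor <;> intro hc <;> refine hx (mem_Sat (κ + k) ?_) <;>
      rw [show S T (κ + k) x = S T κ y from by rw [hydef, S_add]]
    · exact Or.inr (Or.inl hc)
    · exact Or.inr (Or.inr hc)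
  by_contra hno
  push_neg at hno
  by_cases hcase : ∀ m : ℕ, f ((nxt T D)^[m] y) < f ((nxt T D)^[m+1] y)
  · have hyW : y ∈ Wset T D (fun x => -f x) := by
      refine ⟨hyG, ?_⟩
      simp only [mem_iInter, mem_setOf_eq]
      intro m
      exact neg_lt_neg (hcase m)
    have := (hxW 0).2
    rw [S_zero] at this
    exact this hyW
  · push_neg at hcase
    obtain ⟨m, hm⟩ := hcase
    set z0 := (nxt T D)^[m] y with hz0def
    obtain ⟨hz0G, κ0, hκ0⟩ := nxt_iter_good hyG m
    have hdec0 : f (nxt T D z0) < f z0 := by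
      rw [Function.iterate_succ_apply'] at hm
      exact lt_of_le_of_ne hm (fun h => good_nxt_ne hz0G (hfi h))
    have hall : ∀ i : ℕ, f (nxt T D ((nxt T D)^[i] z0)) < f ((nxt T D)^[i] z0) := by
      intro i
      induction i with
      | zero => simpa using hdec0
      | succ i ih =>
        set w := (nxt T D)^[i] z0 with hwdef
        obtain ⟨hwG, κw, hκw⟩ := nxt_iter_good hz0G i
        set u := nxt T D w with hudef
        have huG : u ∈ Good T D := good_nxt hwG
        obtain ⟨huG2, κ1, hκ1⟩ := nxt_iter_good hz0G (i+1)
        have hu1 : u = S T κ1 z0 := by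
          have h' : (nxt T D)^[i+1] z0 = u := Function.iterate_succ_apply' (nxt T D) i z0
          rw [← h']; exact hκ1
        have hu_orb : u = S T (κ1 + (κ0 + k)) x := by
          calc u = S T κ1 z0 := hu1
          _ = S T κ1 (S T κ0 (S T k x)) := by
              rw [show z0 = S T κ0 (S T k x) from hκ0]
          _ = S T (κ1 + (κ0 + k)) x := by rw [S_add, S_add]; congr 1; ring
        have hu_not : u ∉ NextMin T D f := by
          rw [hu_orb]; exact hno _
        have hprvu : prv T D u = w := good_prv_nxt hwG
        have hcond2 : f u < f (prv T D u) := by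
          rw [hprvu]; exact ih
        have hcond1 : ¬ f u < f (nxt T D u) := fun h => hu_not ⟨huG, h, hcond2⟩
        have hne2 : f (nxt T D u) ≠ f u := fun h => good_nxt_ne huG (hfi h)
        rw [Function.iterate_succ_apply']
        exact lt_of_le_of_ne (not_lt.1 hcond1) hne2
    have hz0W : z0 ∈ Wset T D f := by
      refine ⟨hz0G, ?_⟩
      simp only [mem_iInter, mem_setOf_eq]
      intro i
      rw [Function.iterate_succ_apply']
      exact hall i
    exact (hxW κ0).1 (hκ0 ▸ hz0W)

end Chunk6

section Chunk7

variable {X : Type*} [MeasurableSpace X] {T : Equiv.Perm X} {μ : Measure X}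
  [IsProbabilityMeasure μ]

/-- Iterated local-minima sections. -/
noncomputable def Cseq (T : Equiv.Perm X) (f : X → ℝ) : ℕ → Set X
  | 0 => Set.univ
  | (i+1) => NextMin T (Cseq T f i) f

lemma Cseq_meas (hT : Measurable T) (hT' : Measurable T.symm)
    {f : X → ℝ} (hfm : Measurable f) (hfi : Function.Injective f) :
    ∀ i, MeasurableSet (Cseq T f i)
  | 0 => MeasurableSet.univ
  | (i+1) => meas_NextMin hT hT' hfm hfi (Cseq_meas hT hT' hfm hfi i)

lemma Cseq_measure (hT : Measurable T) (hT' : Measurable T.symm)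
    (hpres : ∀ A : Set X, MeasurableSet A → μ (T '' A) = μ A)
    {f : X → ℝ} (hfm : Measurable f) (hfi : Function.Injective f) :
    ∀ i, μ (Cseq T f i) ≤ 2⁻¹ ^ i := by
  intro i
  induction i with
  | zero =>
      show μ Set.univ ≤ 2⁻¹ ^ 0
      simp
  | succ i ih =>
      have hhalf := half_NextMin (μ := μ) hT hT' hpres hfm hfi
        (Cseq_meas hT hT' hfm hfi i)
      by_contra hlt
      push_neg at hlt
      have h1 : (2⁻¹ : ℝ≥0∞) ^ (i+1) + 2⁻¹ ^ (i+1) = 2⁻¹ ^ i := by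
        rw [pow_succ, ← mul_add, ENNReal.inv_two_add_inv_two, mul_one]
      have h2 : (2⁻¹ : ℝ≥0∞) ^ i < μ (NextMin T (Cseq T f i) f) + μ (NextMin T (Cseq T f i) f) := by
        rw [← h1]
        exact ENNReal.add_lt_add hlt hlt
      have h3 : μ (NextMin T (Cseq T f i) f) + μ (NextMin T (Cseq T f i) f) ≤ 2⁻¹ ^ i :=
        le_trans hhalf ih
      exact absurd (lt_of_lt_of_le h2 h3) (lt_irrefl _)

lemma Cseq_sat (hT : Measurable T) (hT' : Measurable T.symm)
    (hpres : ∀ A : Set X, MeasurableSet A → μ (T '' A) = μ A)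
    (haper : ∀ᵐ x ∂μ, ∀ k : ℤ, k ≠ 0 → (T ^ k) x ≠ x)
    {f : X → ℝ} (hfm : Measurable f) (hfi : Function.Injective f) :
    ∀ i, ∀ᵐ x ∂μ, ∃ k : ℤ, S T k x ∈ Cseq T f i := by
  intro i
  induction i with
  | zero => filter_upwards with x; exact ⟨0, Set.mem_univ _⟩
  | succ i ih =>
      have horb := orbit_reach (μ := μ) hT hT' hpres haper hfm hfi
        (Cseq_meas hT hT' hfm hfi i)
      filter_upwards [ih, horb] with x h1 h2
      exact h2 h1

lemma section_lemma (hT : Measurable T) (hT' : Measurable T.symm)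
    (hpres : ∀ A : Set X, MeasurableSet A → μ (T '' A) = μ A)
    (haper : ∀ᵐ x ∂μ, ∀ k : ℤ, k ≠ 0 → (T ^ k) x ≠ x)
    {f : X → ℝ} (hfm : Measurable f) (hfi : Function.Injective f)
    (δ : ℝ≥0∞) (hδ : 0 < δ) :
    ∃ C : Set X, MeasurableSet C ∧ μ C ≤ δ ∧
      ∀ᵐ x ∂μ, ∃ j : ℕ, S T (-(j:ℤ)) x ∈ C := by
  obtain ⟨N, hN⟩ := ENNReal.exists_inv_two_pow_lt hδ.ne'
  set C := Cseq T f N with hCdef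
  have hCm : MeasurableSet C := Cseq_meas hT hT' hfm hfi N
  refine ⟨C, hCm, le_trans (Cseq_measure hT hT' hpres hfm hfi N) hN.le, ?_⟩
  set Bad := ⋃ M : ℕ, {y | y ∈ C ∧ ∀ j : ℕ, M < j → S T ((-1) * j) y ∉ C} with hBaddef
  have hBadm : MeasurableSet Bad := by
    refine MeasurableSet.iUnion fun M => ?_
    have : {y | y ∈ C ∧ ∀ j : ℕ, M < j → S T ((-1) * j) y ∉ C}
        = C ∩ ⋂ (j : ℕ), ⋂ (_ : M < j), S T ((-1) * j) ⁻¹' Cᶜ := by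
      ext y; simp [mem_iInter, mem_preimage]
    rw [this]
    exact hCm.inter <| MeasurableSet.iInter fun j => MeasurableSet.iInter fun _ =>
      (hCm.compl).preimage (measurable_S hT hT' _)
  have hBadnull : μ Bad = 0 :=
    measure_iUnion_null fun M => poincare hT hT' hpres hCm (-1) (Or.inr rfl) M
  have hSatnull : μ (Sat T Bad) = 0 := null_Sat hT hT' hpres hBadm hBadnull
  filter_upwards [Cseq_sat (μ := μ) hT hT' hpres haper hfm hfi N,
    (measure_eq_zero_iff_ae_notMem (μ := μ)).mp hSatnull] with x hk hx
  obtain ⟨k, hkC⟩ := hk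
  rcases le_or_gt k 0 with hk0 | hk0
  · refine ⟨(-k).toNat, ?_⟩
    rw [show (-(((-k).toNat : ℕ) : ℤ)) = k from by omega]
    exact hkC
  · have hyB : S T k x ∉ Bad := fun hc => hx (mem_Sat k hc)
    have hex : ¬ (∀ j : ℕ, k.toNat < j → S T ((-1) * j) (S T k x) ∉ C) := fun hall =>
      hyB (mem_iUnion.2 ⟨k.toNat, hkC, hall⟩)
    push_neg at hex
    obtain ⟨j, hj1, hj2⟩ := hex
    refine ⟨j - k.toNat, ?_⟩
    have harr : S T ((-1) * (j:ℤ)) (S T k x) = S T ((-1) * (j:ℤ) + k) x := S_add T _ _ x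
    rw [show (-(((j - k.toNat : ℕ)) : ℤ)) = (-1) * (j:ℤ) + k from by omega, ← harr]
    exact hj2

end Chunk7

section Chunk8

variable {X : Type*} [MeasurableSpace X] {T : Equiv.Perm X} {μ : Measure X}
  [IsProbabilityMeasure μ]

/-- `L C j` : points whose most recent visit to `C` (backwards) was exactly `j` steps ago. -/
def Lv (T : Equiv.Perm X) (C : Set X) (j : ℕ) : Set X :=
  {x | S T (-(j:ℤ)) x ∈ C ∧ ∀ i : ℕ, i < j → S T (-(i:ℤ)) x ∉ C}

lemma meas_Lv (hT : Measurable T) (hT' : Measurable T.symm)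
    {C : Set X} (hC : MeasurableSet C) (j : ℕ) : MeasurableSet (Lv T C j) := by
  have : Lv T C j = S T (-(j:ℤ)) ⁻¹' C ∩ ⋂ (i : ℕ), ⋂ (_ : i < j), S T (-(i:ℤ)) ⁻¹' Cᶜ := by
    ext x; simp [Lv, mem_iInter, mem_preimage]
  rw [this]
  exact (hC.preimage (measurable_S hT hT' _)).inter <| MeasurableSet.iInter fun i =>
    MeasurableSet.iInter fun _ => (hC.compl).preimage (measurable_S hT hT' _)

lemma Lv_unique {C : Set X} {j j' : ℕ} {x : X} (h : x ∈ Lv T C j) (h' : x ∈ Lv T C j') :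
    j = j' := by
  by_contra hne
  rcases lt_or_gt_of_ne hne with hlt | hlt
  · exact h'.2 j hlt h.1
  · exact h.2 j' hlt h'.1

lemma Lv_zero {C : Set X} : Lv T C 0 = C := by
  ext x
  simp only [Lv, mem_setOf_eq, Nat.cast_zero, neg_zero, S_zero]
  constructor
  · exact fun h => h.1
  · exact fun h => ⟨h, fun i hi => absurd hi (Nat.not_lt_zero i)⟩

lemma Lv_succ_sub {C : Set X} (j : ℕ) : Lv T C (j+1) ⊆ S T 1 '' (Lv T C j) := by
  intro x hx
  refine ⟨S T (-1) x, ⟨?_, ?_⟩, ?_⟩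
  · have h1 : S T (-(j:ℤ)) (S T (-1) x) = S T (-((j:ℕ)+1:ℕ):ℤ) x := by
      rw [S_add]; congr 1; push_cast; ring
    rw [h1]
    exact hx.1
  · intro i hi hC
    have h2 : S T (-(i:ℤ)) (S T (-1) x) = S T (-((i+1:ℕ):ℤ)) x := by
      rw [S_add]; congr 1; push_cast; ring
    rw [h2] at hC
    exact hx.2 (i+1) (by omega) hC
  · rw [S_add]; norm_num [S_zero]

lemma Lv_antitone (hT : Measurable T) (hT' : Measurable T.symm)
    (hpres : ∀ A : Set X, MeasurableSet A → μ (T '' A) = μ A)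
    {C : Set X} (hC : MeasurableSet C) :
    Antitone (fun j : ℕ => μ (Lv T C j)) := by
  apply antitone_nat_of_succ_le
  intro j
  calc μ (Lv T C (j+1)) ≤ μ (S T 1 '' (Lv T C j)) := measure_mono (Lv_succ_sub j)
  _ = μ (Lv T C j) := img_S hT hT' hpres 1 (meas_Lv hT hT' hC j)

lemma Lrel {C : Set X} {j j' m : ℕ} {x : X} (hx : x ∈ Lv T C j)
    (hy : S T (m:ℤ) x ∈ Lv T C j') :
    j' ≤ j + m ∧ (m ≤ j' → j' = j + m) := by
  have part1 : j' ≤ j + m := by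
    by_contra hgt
    push_neg at hgt
    have h1 : S T (-(((j + m : ℕ)) : ℤ)) (S T (m:ℤ) x) = S T (-(j:ℤ)) x := by
      rw [S_add]; congr 1; push_cast; ring
    exact hy.2 (j + m) hgt (by rw [h1]; exact hx.1)
  refine ⟨part1, fun hm => ?_⟩
  have h2 : S T (-(j':ℤ)) (S T (m:ℤ) x) = S T (-(((j' - m : ℕ)) : ℤ)) x := by
    rw [S_add]; congr 1; omega
  have hC : S T (-(((j' - m : ℕ)) : ℤ)) x ∈ C := by rw [← h2]; exact hy.1
  have hge : j ≤ j' - m := by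
    by_contra hlt
    push_neg at hlt
    exact hx.2 (j' - m) hlt hC
  omega

lemma uniq_div {P q1 q2 a1 a2 : ℕ} (h : q1*P + a1 = q2*P + a2) (h1 : a1 < P) (h2 : a2 < P) :
    a1 = a2 := by
  have e1 : (q1*P + a1) % P = a1 := by
    rw [Nat.add_comm, Nat.add_mul_mod_self_right, Nat.mod_eq_of_lt h1]
  have e2 : (q2*P + a2) % P = a2 := by
    rw [Nat.add_comm, Nat.add_mul_mod_self_right, Nat.mod_eq_of_lt h2]
  rw [h, e2] at e1
  exact e1.symm

/-- Pattern set with offset `o`. -/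
def patt (T : Equiv.Perm X) (C : Set X) (n o : ℕ) : Set X :=
  ⋃ q : ℕ, ⋃ s : Fin (n+1), Lv T C ((q+1)*(4*(n+1)) + (o + s.1))

lemma meas_patt (hT : Measurable T) (hT' : Measurable T.symm)
    {C : Set X} (hC : MeasurableSet C) (n o : ℕ) : MeasurableSet (patt T C n o) :=
  MeasurableSet.iUnion fun q => MeasurableSet.iUnion fun s => meas_Lv hT hT' hC _

lemma patt_sep {C : Set X} {n : ℕ} {k : ℤ} (hk : |k| ≤ (n:ℤ)) :
    S T k '' (patt T C n 0) ∩ (patt T C n (2*n+2)) = ∅ := by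
  rw [Set.eq_empty_iff_forall_notMem]
  rintro z ⟨⟨x, hxA, rfl⟩, hzB⟩
  simp only [patt, mem_iUnion] at hxA hzB
  obtain ⟨q, s, hx⟩ := hxA
  obtain ⟨q', s', hz⟩ := hzB
  have hs : s.1 ≤ n := by omega
  have hs' : s'.1 ≤ n := by omega
  have hP' : 4*(n+1) ≤ (q'+1)*(4*(n+1)) := Nat.le_mul_of_pos_left _ (by omega)
  have hP : 4*(n+1) ≤ (q+1)*(4*(n+1)) := Nat.le_mul_of_pos_left _ (by omega)
  have hk1 : -(n:ℤ) ≤ k ∧ k ≤ (n:ℤ) := abs_le.mp hk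
  rcases le_or_gt 0 k with hk0 | hk0
  · set m := k.toNat with hm
    have hmk : (m : ℤ) = k := Int.toNat_of_nonneg hk0
    have hmn : m ≤ n := by omega
    have hy : S T (m:ℤ) x ∈ Lv T C ((q'+1)*(4*(n+1)) + (2*n+2 + s'.1)) := by
      rw [hmk]; exact hz
    obtain ⟨hle, heq⟩ := Lrel hx hy
    have hj' : m ≤ (q'+1)*(4*(n+1)) + (2*n+2 + s'.1) := by omega
    have heq2 := heq hj'
    have huniq : 2*n+2 + s'.1 = (0 + s.1) + m := by
      have harr : (q'+1)*(4*(n+1)) + (2*n+2 + s'.1) = (q+1)*(4*(n+1)) + ((0 + s.1) + m) := by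
        omega
      exact uniq_div harr (by omega) (by omega)
    omega
  · set m := (-k).toNat with hm
    have hmk : (m : ℤ) = -k := Int.toNat_of_nonneg (by omega)
    have hm1 : 1 ≤ m := by omega
    have hmn : m ≤ n := by omega
    have hxx : S T (m:ℤ) (S T k x) = x := by
      rw [S_add, show (m:ℤ) + k = 0 from by omega, S_zero]
    have hy : S T (m:ℤ) (S T k x) ∈ Lv T C ((q+1)*(4*(n+1)) + (0 + s.1)) := by
      rw [hxx]; exact hx
    obtain ⟨hle, heq⟩ := Lrel hz hy
    have hj : m ≤ (q+1)*(4*(n+1)) + (0 + s.1) := by omega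
    have heq2 := heq hj
    have huniq : 0 + s.1 = (2*n+2 + s'.1) + m := by
      have harr : (q+1)*(4*(n+1)) + (0 + s.1)
          = (q'+1)*(4*(n+1)) + ((2*n+2 + s'.1) + m) := by omega
      exact uniq_div harr (by omega) (by omega)
    omega

end Chunk8

section Chunk9

variable {X : Type*} [MeasurableSpace X] {T : Equiv.Perm X} {μ : Measure X}
  [IsProbabilityMeasure μ]

lemma patt_measure (hT : Measurable T) (hT' : Measurable T.symm)
    (hpres : ∀ A : Set X, MeasurableSet A → μ (T '' A) = μ A)
    {C : Set X} (hC : MeasurableSet C)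
    (hsec : ∀ᵐ x ∂μ, ∃ j : ℕ, S T (-(j:ℤ)) x ∈ C) (n o : ℕ) (ho : o + n ≤ 3*n+2) :
    (1/4 : ℝ≥0∞) * (1 - (((4*(n+1) : ℕ) : ℝ≥0∞) * μ C + ((4*(n+1) : ℕ) : ℝ≥0∞) * μ C))
      ≤ μ (patt T C n o) := by
  classical
  set P := 4*(n+1) with hPdef
  have hP0 : 0 < P := by omega
  set G : Set X := ⋃ j : ℕ, Lv T C j with hGdef
  set blk : ℕ → Set X := fun t => ⋃ s : Fin P, Lv T C (t*P + s.1) with hblkdef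
  have hLm : ∀ j, MeasurableSet (Lv T C j) := meas_Lv hT hT' hC
  have hblkm : ∀ t, MeasurableSet (blk t) := fun t => MeasurableSet.iUnion fun s => hLm _
  have hmono := Lv_antitone (μ := μ) hT hT' hpres hC
  have hGm : MeasurableSet G := MeasurableSet.iUnion fun j => hLm j
  have hGae : ∀ᵐ x ∂μ, x ∈ G := by
    filter_upwards [hsec] with x hx
    have hjex : ∃ j : ℕ, S T (-(j:ℤ)) x ∈ C := hx
    exact mem_iUnion.2 ⟨Nat.find hjex, Nat.find_spec hjex, fun i hi => Nat.find_min hjex hi⟩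
  have hG1 : μ G = 1 := by
    have h0 : μ Gᶜ = 0 := by
      rw [measure_eq_zero_iff_ae_notMem]
      filter_upwards [hGae] with x hx
      simp [hx]
    have h2 := measure_add_measure_compl (μ := μ) hGm
    rw [h0, add_zero, measure_univ] at h2
    exact h2
  have hblk_inj : ∀ {t t' : ℕ} {x : X}, x ∈ blk t → x ∈ blk t' → t = t' := by
    intro t t' x hx hx'
    obtain ⟨s, hs⟩ := mem_iUnion.1 hx
    obtain ⟨s', hs'⟩ := mem_iUnion.1 hx'
    have heq := Lv_unique hs hs'
    have hss : s.1 = s'.1 := uniq_div heq s.2 s'.2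
    have hmul : t * P = t' * P := by omega
    exact Nat.eq_of_mul_eq_mul_right hP0 hmul
  have hblk_disj : Pairwise (Function.onFun Disjoint blk) := by
    intro t t' hne
    rw [Function.onFun, Set.disjoint_left]
    intro x hx hx'
    exact hne (hblk_inj hx hx')
  have hblk_le : ∀ t j0, j0 ≤ t * P → μ (blk t) ≤ P • μ (Lv T C j0) := by
    intro t j0 hj0
    calc μ (blk t) ≤ ∑ s : Fin P, μ (Lv T C (t*P + s.1)) := measure_iUnion_fintype_le μ _
    _ ≤ Finset.univ.card • μ (Lv T C j0) := by
        apply Finset.sum_le_card_nsmul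
        intro s _
        exact hmono (by omega)
    _ = P • μ (Lv T C j0) := by simp
  set Ab : ℕ → Set X := fun q => ⋃ s : Fin (n+1), Lv T C ((q+1)*P + (o + s.1)) with hAbdef
  have hAbm : ∀ q, MeasurableSet (Ab q) := fun q => MeasurableSet.iUnion fun s => hLm _
  have hos : ∀ s : Fin (n+1), o + s.1 < P := fun s => by have := s.2; omega
  have hAb_disj : Pairwise (Function.onFun Disjoint Ab) := by
    intro q q' hne
    rw [Function.onFun, Set.disjoint_left]
    intro x hx hx'
    obtain ⟨s, hs⟩ := mem_iUnion.1 hx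
    obtain ⟨s', hs'⟩ := mem_iUnion.1 hx'
    have heq := Lv_unique hs hs'
    have hss : o + s.1 = o + s'.1 := uniq_div heq (hos s) (hos s')
    have hmul : (q+1) * P = (q'+1) * P := by omega
    exact hne (by have := Nat.eq_of_mul_eq_mul_right hP0 hmul; omega)
  have hpatt_eq : μ (patt T C n o) = ∑' q, μ (Ab q) := measure_iUnion hAb_disj hAbm
  have hq_lb : ∀ q, (1/4 : ℝ≥0∞) * μ (blk (q+2)) ≤ μ (Ab q) := by
    intro q
    set c := μ (Lv T C ((q+1)*P + (3*n+2))) with hcdef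
    have h1 : μ (Ab q) = ∑' s : Fin (n+1), μ (Lv T C ((q+1)*P + (o + s.1))) := by
      refine measure_iUnion ?_ (fun s => hLm _)
      intro s s' hne
      rw [Function.onFun, Set.disjoint_left]
      intro x hx hx'
      have heq := Lv_unique hx hx'
      exact hne (Fin.val_injective (by omega))
    have h2 : (n+1) • c ≤ μ (Ab q) := by
      rw [h1, tsum_fintype]
      have h3 := Finset.card_nsmul_le_sum Finset.univ
        (fun s : Fin (n+1) => μ (Lv T C ((q+1)*P + (o + s.1)))) c
        (fun s _ => hmono (by have := s.2; omega))
      simpa using h3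
    have h3 : μ (blk (q+2)) ≤ P • c := by
      apply hblk_le
      have hq2 : (q+2)*P = (q+1)*P + P := by ring
      omega
    have hps : (1/4 : ℝ≥0∞) * (P • c) = (n+1) • c := by
      rw [nsmul_eq_mul, nsmul_eq_mul, hPdef]
      push_cast
      have h4 : (1/4 : ℝ≥0∞) * 4 = 1 := by
        rw [one_div]; exact ENNReal.inv_mul_cancel (by norm_num) (by norm_num)
      calc (1/4:ℝ≥0∞) * (4*((n:ℝ≥0∞)+1)*c) = ((1/4:ℝ≥0∞)*4)*(((n:ℝ≥0∞)+1)*c) := by ring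
      _ = ((n:ℝ≥0∞)+1)*c := by rw [h4, one_mul]
    calc (1/4 : ℝ≥0∞) * μ (blk (q+2)) ≤ (1/4) * (P • c) := mul_le_mul_right h3 _
    _ = (n+1) • c := hps
    _ ≤ μ (Ab q) := h2
  have hsum2 : ∑' q, (1/4:ℝ≥0∞) * μ (blk (q+2)) = (1/4) * ∑' q, μ (blk (q+2)) :=
    ENNReal.tsum_mul_left
  have hsum3 : ∑' q : ℕ, μ (blk (q+2)) = μ (⋃ q : ℕ, blk (q+2)) := by
    refine (measure_iUnion ?_ (fun q => hblkm _)).symm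
    intro q q' hne
    exact hblk_disj (show q+2 ≠ q'+2 by omega)
  have hcover : G ⊆ (⋃ q : ℕ, blk (q+2)) ∪ (blk 0 ∪ blk 1) := by
    intro x hx
    obtain ⟨j, hj⟩ := mem_iUnion.1 (show x ∈ ⋃ j : ℕ, Lv T C j from hx)
    have hdm : (j / P) * P + (j % P) = j := by
      have h5 := Nat.div_add_mod j P
      rw [Nat.mul_comm] at h5
      exact h5
    have hmod : j % P < P := Nat.mod_lt _ hP0
    have hxblk : x ∈ blk (j / P) := by
      refine mem_iUnion.2 ⟨⟨j % P, hmod⟩, ?_⟩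
      show x ∈ Lv T C ((j / P) * P + j % P)
      rw [hdm]
      exact hj
    rcases Nat.lt_or_ge (j / P) 2 with h2 | h2
    · have h01 : j / P = 0 ∨ j / P = 1 :=
        (show ∀ a : ℕ, a < 2 → a = 0 ∨ a = 1 from fun a h => by omega) _ h2
      rcases h01 with h | h
      · exact Or.inr (Or.inl (h ▸ hxblk))
      · exact Or.inr (Or.inr (h ▸ hxblk))
    · left
      exact mem_iUnion.2 ⟨j/P - 2, by
        rw [Nat.sub_add_cancel h2]; exact hxblk⟩
  have hbig : 1 - (μ (blk 0) + μ (blk 1)) ≤ μ (⋃ q : ℕ, blk (q+2)) := by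
    have hle1 : (1:ℝ≥0∞) ≤ μ (⋃ q : ℕ, blk (q+2)) + (μ (blk 0) + μ (blk 1)) := by
      calc (1:ℝ≥0∞) = μ G := hG1.symm
      _ ≤ μ ((⋃ q : ℕ, blk (q+2)) ∪ (blk 0 ∪ blk 1)) := measure_mono hcover
      _ ≤ μ (⋃ q : ℕ, blk (q+2)) + μ (blk 0 ∪ blk 1) := measure_union_le _ _
      _ ≤ μ (⋃ q : ℕ, blk (q+2)) + (μ (blk 0) + μ (blk 1)) :=
          add_le_add_right (measure_union_le _ _) _
    exact tsub_le_iff_right.2 hle1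
  have hb0 : μ (blk 0) ≤ ((P : ℕ) : ℝ≥0∞) * μ C := by
    have h6 := hblk_le 0 0 (by omega)
    rwa [Lv_zero, nsmul_eq_mul] at h6
  have hb1 : μ (blk 1) ≤ ((P : ℕ) : ℝ≥0∞) * μ C := by
    have h6 := hblk_le 1 0 (by omega)
    rwa [Lv_zero, nsmul_eq_mul] at h6
  calc (1/4:ℝ≥0∞) * (1 - (((P:ℕ):ℝ≥0∞) * μ C + ((P:ℕ):ℝ≥0∞) * μ C))
      ≤ (1/4) * (1 - (μ (blk 0) + μ (blk 1))) :=
        mul_le_mul_right (tsub_le_tsub_left (add_le_add hb0 hb1) 1) _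
  _ ≤ (1/4) * μ (⋃ q : ℕ, blk (q+2)) := mul_le_mul_right hbig _
  _ = ∑' q, (1/4:ℝ≥0∞) * μ (blk (q+2)) := by rw [hsum2, hsum3]
  _ ≤ ∑' q, μ (Ab q) := ENNReal.tsum_le_tsum hq_lb
  _ = μ (patt T C n o) := hpatt_eq.symm

end Chunk9

section Chunk10

variable {X : Type*} [MeasurableSpace X] {T : Equiv.Perm X} {μ : Measure X}
  [IsProbabilityMeasure μ]

lemma quarter_bound {ε y : ℝ≥0∞} (hy : y ≤ min 1 ε) :
    (1/4 : ℝ≥0∞) - ε ≤ (1/4) * (1 - y) := by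
  have hy1 : y ≤ 1 := le_trans hy (min_le_left _ _)
  have hyε : y ≤ ε := le_trans hy (min_le_right _ _)
  rw [tsub_le_iff_right]
  calc (1/4:ℝ≥0∞) = (1/4) * ((1 - y) + y) := by rw [tsub_add_cancel_of_le hy1, mul_one]
  _ = (1/4)*(1-y) + (1/4)*y := by rw [mul_add]
  _ ≤ (1/4)*(1-y) + y := by
      refine add_le_add_right ?_ _
      calc (1/4:ℝ≥0∞)*y ≤ 1*y := mul_le_mul_left (by norm_num) y
      _ = y := one_mul y
  _ ≤ (1/4)*(1-y) + ε := add_le_add_right hyε _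

lemma main_exists (hT : Measurable T) (hT' : Measurable T.symm)
    (hpres : ∀ A : Set X, MeasurableSet A → μ (T '' A) = μ A)
    (haper : ∀ᵐ x ∂μ, ∀ k : ℤ, k ≠ 0 → (T ^ k) x ≠ x)
    {f : X → ℝ} (hfm : Measurable f) (hfi : Function.Injective f)
    (n : ℕ) (ε : ℝ≥0∞) (hε : 0 < ε) :
    ∃ A B : Set X, MeasurableSet A ∧ MeasurableSet B ∧
      1 / 4 - ε ≤ μ A ∧ 1 / 4 - ε ≤ μ B ∧
      ∀ k : ℤ, |k| ≤ (n:ℤ) → μ ((T ^ k) '' A ∩ B) = 0 := by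
  set Pc : ℝ≥0∞ := ((4*(n+1) : ℕ) : ℝ≥0∞) with hPc
  have hPc0 : Pc ≠ 0 := by
    simp only [hPc, ne_eq, Nat.cast_eq_zero]
    omega
  have hPcT : Pc ≠ ∞ := ENNReal.natCast_ne_top _
  have h2Pc0 : (2:ℝ≥0∞) * Pc ≠ 0 := by
    simp only [ne_eq, mul_eq_zero, not_or]
    exact ⟨by norm_num, hPc0⟩
  have h2PcT : (2:ℝ≥0∞) * Pc ≠ ∞ := ENNReal.mul_ne_top (by norm_num) hPcT
  set δ : ℝ≥0∞ := (min 1 ε) / (2 * Pc) with hδdef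
  have hδ0 : 0 < δ :=
    ENNReal.div_pos (ne_of_gt (lt_min zero_lt_one hε)) h2PcT
  obtain ⟨C, hCm, hCδ, hsec⟩ := section_lemma (μ := μ) hT hT' hpres haper hfm hfi δ hδ0
  have hy : Pc * μ C + Pc * μ C ≤ min 1 ε := by
    have h1 : Pc * μ C ≤ Pc * δ := mul_le_mul_right hCδ _
    calc Pc * μ C + Pc * μ C ≤ Pc * δ + Pc * δ := add_le_add h1 h1
    _ = (2 * Pc) * δ := by ring
    _ = min 1 ε := ENNReal.mul_div_cancel h2Pc0 h2PcT
  have hbA := patt_measure (μ := μ) hT hT' hpres hCm hsec n 0 (by omega)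
  have hbB := patt_measure (μ := μ) hT hT' hpres hCm hsec n (2*n+2) (by omega)
  have hquarter := quarter_bound (ε := ε) hy
  refine ⟨patt T C n 0, patt T C n (2*n+2), meas_patt hT hT' hCm n 0,
    meas_patt hT hT' hCm n (2*n+2), ?_, ?_, ?_⟩
  · exact le_trans hquarter hbA
  · exact le_trans hquarter hbB
  · intro k hk
    have hemp := patt_sep (T := T) (C := C) (n := n) (k := k) hk
    show μ (S T k '' (patt T C n 0) ∩ patt T C n (2*n+2)) = 0
    rw [hemp]
    exact measure_empty

end Chunk10

end Stmt12Aux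


/-- For an aperiodic measure-preserving automorphism `T` of `(X, μ)`, one can
find, for every `n` and `ε > 0`, two sets of measure at least `1/4 - ε` that are at
`d_T`-distance more than `n`; in particular `(X, d_T, μ)` is not concentrated. -/
theorem stmt12 {X : Type*} [MeasurableSpace X] [StandardBorelSpace X]
    (μ : Measure X) [IsProbabilityMeasure μ] [NullSingletonClass μ]
    (T : Equiv.Perm X) (hT : Measurable T) (hT' : Measurable T.symm)
    (hpres : ∀ A : Set X, MeasurableSet A → μ (T '' A) = μ A)
    (haper : ∀ᵐ x ∂μ, ∀ k : ℤ, k ≠ 0 → (T ^ k) x ≠ x) :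
    (∀ n : ℕ, ∀ ε : ℝ≥0∞, 0 < ε →
      ∃ A B : Set X, MeasurableSet A ∧ MeasurableSet B ∧
        1 / 4 - ε ≤ μ A ∧ 1 / 4 - ε ≤ μ B ∧
        ∀ k : ℤ, |k| ≤ (n : ℤ) → μ ((T ^ k) '' A ∩ B) = 0) ∧
    ¬ ConcentratedOrbit T μ := by
    classical
  obtain ⟨f, hf⟩ := exists_measurableEmbedding_real X
  have hfm : Measurable f := hf.measurable
  have hfi : Function.Injective f := hf.injective
  have hmain : ∀ n : ℕ, ∀ ε : ℝ≥0∞, 0 < ε →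
      ∃ A B : Set X, MeasurableSet A ∧ MeasurableSet B ∧
        1 / 4 - ε ≤ μ A ∧ 1 / 4 - ε ≤ μ B ∧
        ∀ k : ℤ, |k| ≤ (n : ℤ) → μ ((T ^ k) '' A ∩ B) = 0 :=
    fun n ε hε => Stmt12Aux.main_exists hT hT' hpres haper hfm hfi n ε hε
  refine ⟨hmain, ?_⟩
  intro hcon
  have h18 : (1/8 : ℝ≥0∞) + 1/8 = 1/4 := by
    rw [ENNReal.div_add_div_same]
    rw [show (1+1:ℝ≥0∞) = 2 from by norm_num]
    rw [ENNReal.div_eq_div_iff (by norm_num) (by norm_num) (by norm_num) (by norm_num)]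
    norm_num
  have h8pos : (0:ℝ≥0∞) < 1/8 := by norm_num
  obtain ⟨r, hr⟩ := hcon (1/8) h8pos
  obtain ⟨A, B, hAm, hBm, hA, hB, hAB⟩ := hmain r (1/8) h8pos
  have h8le : (1/8 : ℝ≥0∞) ≤ 1/4 - 1/8 := by
    rw [← h18, ENNReal.add_sub_cancel_right (by norm_num : (1/8:ℝ≥0∞) ≠ ⊤)]
  have hpos := hr A B hAm hBm (le_trans h8le hA) (le_trans h8le hB)
  have hsub : {x ∈ A | ∃ k : ℤ, |k| ≤ (r : ℤ) ∧ (T ^ k) x ∈ B}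
      ⊆ ⋃ k : ℤ, ⋃ (_ : |k| ≤ (r:ℤ)), (A ∩ Stmt12Aux.S T k ⁻¹' B) := by
    rintro x ⟨hxA, k, hk, hxB⟩
    exact Set.mem_iUnion.2 ⟨k, Set.mem_iUnion.2 ⟨hk, hxA, hxB⟩⟩
  have hnull : ∀ k : ℤ, μ (⋃ (_ : |k| ≤ (r:ℤ)), (A ∩ Stmt12Aux.S T k ⁻¹' B)) = 0 := by
    intro k
    refine measure_iUnion_null fun hk => ?_
    have himg : Stmt12Aux.S T k '' (A ∩ Stmt12Aux.S T k ⁻¹' B)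
        = Stmt12Aux.S T k '' A ∩ B := by
      show ⇑(T^k) '' (A ∩ ⇑(T^k) ⁻¹' B) = ⇑(T^k) '' A ∩ B
      rw [Set.image_inter (Equiv.injective _), Set.image_preimage_eq _ (Equiv.surjective _)]
    have hmeas : MeasurableSet (A ∩ Stmt12Aux.S T k ⁻¹' B) :=
      hAm.inter (hBm.preimage (Stmt12Aux.measurable_S hT hT' k))
    have heq := Stmt12Aux.img_S hT hT' hpres k hmeas
    rw [himg] at heq
    rw [← heq]
    exact hAB k hk
  have hWnull : μ {x ∈ A | ∃ k : ℤ, |k| ≤ (r : ℤ) ∧ (T ^ k) x ∈ B} = 0 :=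
    measure_mono_null hsub (measure_iUnion_null hnull)
  rw [hWnull] at hpos
  exact lt_irrefl 0 hpos
end

section
/- Let Γ be a countable group acting by Borel automorphisms on a standard Borel space X, and let μ and ν be two equivalent (mutually absolutely continuous) atomless quasi-invariant Borel probability measures on X. Then there exists a nontrivial asymptotically invariant sequence for the action with respect to μ if and only if there exists one with respect to ν; in particular, strong ergodicity of the action depends only on the measure class of μ. -/
open MeasureTheory Filter Set
open scoped ENNReal

variable {X : Type*} [MeasurableSpace X]

lemma unif_ac {X : Type*} [MeasurableSpace X] {μ ν : Measure X} [SigmaFinite μ] [IsFiniteMeasure ν]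
    (h : ν ≪ μ) {ε : ℝ≥0∞} (hε : ε ≠ 0) :
    ∃ δ : ℝ≥0∞, 0 < δ ∧ ∀ s : Set X, MeasurableSet s → μ s < δ → ν s < ε := by
  have hfin : ∫⁻ x, ν.rnDeriv μ x ∂μ ≠ ∞ :=
    (Measure.lintegral_rnDeriv_le.trans_lt (measure_lt_top ν univ)).ne
  obtain ⟨δ, hδ0, hδ⟩ := exists_pos_setLIntegral_lt_of_measure_lt hfin hε
  exact ⟨δ, hδ0, fun s hs hμs => by
    rw [← Measure.setLIntegral_rnDeriv' h hs]; exact hδ s hμs⟩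

lemma tendsto_transfer {X : Type*} [MeasurableSpace X] {μ ν : Measure X} [SigmaFinite μ] [IsFiniteMeasure ν]
    (h : ν ≪ μ) {S : ℕ → Set X} (hS : ∀ n, MeasurableSet (S n))
    (hμS : Tendsto (fun n => μ (S n)) atTop (nhds 0)) :
    Tendsto (fun n => ν (S n)) atTop (nhds 0) := by
  rw [ENNReal.tendsto_nhds_zero]
  intro ε hε
  obtain ⟨δ, hδ0, hδ⟩ := unif_ac h hε.ne'
  filter_upwards [hμS (Iio_mem_nhds hδ0)] with n hn
  exact (hδ _ (hS n) hn).le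

lemma oneDir {Γ X : Type*} [Group Γ] [MeasurableSpace X] [StandardBorelSpace X]
    (μ ν : Measure X) [IsProbabilityMeasure μ] [IsProbabilityMeasure ν]
    (α : Γ →* Equiv.Perm X) (hmeas : ∀ γ : Γ, Measurable (α γ))
    (hμν : μ ≪ ν) (hνμ : ν ≪ μ)
    (H : ∃ A : ℕ → Set X, (∀ n, MeasurableSet (A n)) ∧
        (∀ γ : Γ, Tendsto (fun n => μ (symmDiff (α γ '' A n) (A n))) atTop (nhds 0)) ∧
        (∃ δ : ℝ≥0∞, 0 < δ ∧ ∀ n, δ ≤ μ (A n) ∧ μ (A n) ≤ 1 - δ)) :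
    ∃ A : ℕ → Set X, (∀ n, MeasurableSet (A n)) ∧
        (∀ γ : Γ, Tendsto (fun n => ν (symmDiff (α γ '' A n) (A n))) atTop (nhds 0)) ∧
        (∃ δ : ℝ≥0∞, 0 < δ ∧ ∀ n, δ ≤ ν (A n) ∧ ν (A n) ≤ 1 - δ) := by
  obtain ⟨A, hA, hai, δ, hδ0, hδ⟩ := H
  have himg : ∀ (γ : Γ) n, MeasurableSet (α γ '' A n) := fun γ n =>
    (((hmeas γ).measurableEmbedding (α γ).injective).measurableSet_image).2 (hA n)
  refine ⟨A, hA, fun γ => ?_, ?_⟩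
  · exact tendsto_transfer hνμ (fun n => (himg γ n).symmDiff (hA n)) (hai γ)
  · obtain ⟨δ', hδ'0, hδ'⟩ := unif_ac hμν hδ0.ne'
    set δ'' := min δ' 1 with hδ''def
    have hδ''0 : 0 < δ'' := lt_min hδ'0 zero_lt_one
    have hδ''le : δ'' ≤ δ' := min_le_left _ _
    have hlow : ∀ s : Set X, MeasurableSet s → δ ≤ μ s → δ'' ≤ ν s := by
      intro s hs hms
      by_contra hc
      push_neg at hc
      exact absurd (hδ' s hs (hc.trans_le hδ''le)) (not_lt.2 hms)
    refine ⟨δ'', hδ''0, fun n => ⟨hlow _ (hA n) (hδ n).1, ?_⟩⟩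
    have hδ1 : δ ≤ 1 := (hδ n).1.trans prob_le_one
    have hcompl : δ ≤ μ (A n)ᶜ := by
      rw [measure_compl (hA n) (measure_ne_top μ _), measure_univ]
      calc δ = 1 - (1 - δ) := (ENNReal.sub_sub_cancel ENNReal.one_ne_top hδ1).symm
        _ ≤ 1 - μ (A n) := tsub_le_tsub_left (hδ n).2 1
    have hν : δ'' ≤ ν (A n)ᶜ := hlow _ (hA n).compl hcompl
    have hadd : ν (A n) + ν (A n)ᶜ = 1 := by
      rw [measure_add_measure_compl (hA n), measure_univ]
    have : δ'' + ν (A n) ≤ 1 := by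
      calc δ'' + ν (A n) ≤ ν (A n)ᶜ + ν (A n) := by gcongr
        _ = 1 := by rw [add_comm]; exact hadd
    exact ENNReal.le_sub_of_add_le_left (ne_top_of_le_ne_top ENNReal.one_ne_top (min_le_right _ _)) this


/-- Existence of nontrivial asymptotically invariant sequences for a countable
group action depends only on the measure class of the quasi-invariant probability measure. -/
theorem stmt14 {Γ X : Type*} [Group Γ] [Countable Γ]
    [MeasurableSpace X] [StandardBorelSpace X]
    (μ ν : Measure X) [IsProbabilityMeasure μ] [IsProbabilityMeasure ν]
    [NullSingletonClass μ] [NullSingletonClass ν]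
    (α : Γ →* Equiv.Perm X) (hmeas : ∀ γ : Γ, Measurable (α γ))
    (hqiμ : ∀ γ : Γ, ∀ A : Set X, MeasurableSet A → (μ A = 0 ↔ μ (α γ '' A) = 0))
    (hqiν : ∀ γ : Γ, ∀ A : Set X, MeasurableSet A → (ν A = 0 ↔ ν (α γ '' A) = 0))
    (hequiv : ∀ A : Set X, MeasurableSet A → (μ A = 0 ↔ ν A = 0)) :
    (∃ A : ℕ → Set X, (∀ n, MeasurableSet (A n)) ∧
        (∀ γ : Γ, Tendsto (fun n => μ (symmDiff (α γ '' A n) (A n))) atTop (nhds 0)) ∧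
        (∃ δ : ℝ≥0∞, 0 < δ ∧ ∀ n, δ ≤ μ (A n) ∧ μ (A n) ≤ 1 - δ)) ↔
      (∃ A : ℕ → Set X, (∀ n, MeasurableSet (A n)) ∧
        (∀ γ : Γ, Tendsto (fun n => ν (symmDiff (α γ '' A n) (A n))) atTop (nhds 0)) ∧
        (∃ δ : ℝ≥0∞, 0 < δ ∧ ∀ n, δ ≤ ν (A n) ∧ ν (A n) ≤ 1 - δ)) := by
  
  have hνμ : ν ≪ μ := Measure.AbsolutelyContinuous.mk fun s hs h0 => (hequiv s hs).mp h0
  have hμν : μ ≪ ν := Measure.AbsolutelyContinuous.mk fun s hs h0 => (hequiv s hs).mpr h0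
  exact ⟨oneDir μ ν α hmeas hμν hνμ, oneDir ν μ α hmeas hνμ hμν⟩
end
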